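/- Let H be a finite, simple, connected graph with at least one edge and let G = L(H) be its line graph. Then −2 is an eigenvalue of the adjacency matrix A(G) if and only if H contains a cycle of even length, or H contains two cycles of odd length with distinct edge sets. -/

import Mathlib

open Finset SimpleGraph

namespace Stmt8

variable {V : Type*} [Fintype V] [DecidableEq V] {H : SimpleGraph V}

/-- Alternating signed count of occurrences of an edge along a walk. -/
def wsum : ∀ {x y : V}, H.Walk x y → Sym2 V → ℤ
  | _, _, .nil, _ => 0
  | x, _, .cons (v := b) _ p, e => (if s(x, b) = e then 1 else 0) - wsum p e

@[simp] lemma wsum_nil {x : V} (e : Sym2 V) : wsum (.nil : H.Walk x x) e = 0 := rfl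

lemma wsum_cons {x b y : V} (h : H.Adj x b) (p : H.Walk b y) (e : Sym2 V) :
    wsum (.cons h p) e = (if s(x, b) = e then 1 else 0) - wsum p e := rfl

lemma even_wsum_sub_count {x y : V} (p : H.Walk x y) (e : Sym2 V) :
    Even (wsum p e - (p.edges.count e : ℤ)) := by
  induction p with
  | nil => simp
  | cons h p ih =>
    simp only [wsum_cons, Walk.edges_cons, List.count_cons, beq_iff_eq]
    obtain ⟨k, hk⟩ := ih
    push_cast
    split_ifs with h1 <;> exact ⟨-k - (p.edges.count e : ℤ), by linarith⟩

lemma wsum_ne_zero_of_odd_count {x y : V} (p : H.Walk x y) (e : Sym2 V)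
    (h : Odd (p.edges.count e)) : wsum p e ≠ 0 := by
  obtain ⟨k, hk⟩ := even_wsum_sub_count p e
  obtain ⟨j, hj⟩ := h
  intro h0
  omega


section VSum

variable [DecidableRel H.Adj]

/-- Sum of `u` over the edges incident to `v`. -/
def vsum (H : SimpleGraph V) [DecidableRel H.Adj] (u : H.edgeSet → ℝ) (v : V) : ℝ :=
  ∑ e : H.edgeSet, if v ∈ (e : Sym2 V) then u e else 0

lemma sum_single_edge {e₀ : Sym2 V} (he : e₀ ∈ H.edgeSet) (f : Sym2 V → ℝ) :
    ∑ e : H.edgeSet, (if e₀ = (e : Sym2 V) then f (e : Sym2 V) else 0) = f e₀ := by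
  rw [Fintype.sum_eq_single (⟨e₀, he⟩ : H.edgeSet)]
  · simp
  · intro b hb
    rw [if_neg fun hc => hb (Subtype.ext hc.symm)]

lemma sum_pair_mem {a b : V} (hab : a ≠ b) (f : V → ℝ) :
    ∑ v : V, (if v ∈ s(a, b) then f v else 0) = f a + f b := by
  have : ∀ v : V, (if v ∈ s(a, b) then f v else 0)
      = (if v ∈ ({a, b} : Finset V) then f v else 0) := by
    intro v
    simp [Sym2.mem_iff]
  simp_rw [this]
  rw [Finset.sum_ite_mem, Finset.univ_inter, Finset.sum_pair hab]

lemma vsum_wsum {x y : V} (p : H.Walk x y) (v : V) :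
    vsum H (fun e => ((wsum p (e : Sym2 V) : ℤ) : ℝ)) v
      = (if v = x then 1 else 0) - (-1 : ℝ) ^ p.length * (if v = y then 1 else 0) := by
  induction p with
  | nil => simp [vsum]
  | @cons a b c h p ih =>
    simp only [vsum] at ih ⊢
    have hsplit : ∀ e : H.edgeSet,
        (if v ∈ (e : Sym2 V) then ((wsum (Walk.cons h p) (e : Sym2 V) : ℤ) : ℝ) else 0)
        = (if v ∈ (e : Sym2 V) then (if s(a, b) = (e : Sym2 V) then (1 : ℝ) else 0) else 0)
          - (if v ∈ (e : Sym2 V) then ((wsum p (e : Sym2 V) : ℤ) : ℝ) else 0) := by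
      intro e
      rw [wsum_cons]
      push_cast
      split <;> simp
    simp_rw [hsplit, Finset.sum_sub_distrib, ih]
    have hswap : ∀ e : H.edgeSet,
        (if v ∈ (e : Sym2 V) then (if s(a, b) = (e : Sym2 V) then (1 : ℝ) else 0) else 0)
        = (if s(a, b) = (e : Sym2 V) then (if v ∈ (e : Sym2 V) then (1 : ℝ) else 0) else 0) := by
      intro e
      split_ifs <;> rfl
    rw [Finset.sum_congr rfl fun e _ => hswap e,
      sum_single_edge (H.mem_edgeSet.2 h) (fun s => if v ∈ s then (1 : ℝ) else 0)]
    have h2 : (if v ∈ s(a, b) then (1 : ℝ) else 0)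
        = (if v = a then 1 else 0) + (if v = b then 1 else 0) := by
      by_cases hva : v = a <;> by_cases hvb : v = b
      · exact absurd (hva.symm.trans hvb) h.ne
      all_goals simp [Sym2.mem_iff, hva, hvb, h.ne, h.ne']
    rw [h2, Walk.length_cons, pow_succ]
    ring

lemma sym2_eq_of_mem {a b : V} {f : Sym2 V} (hab : a ≠ b) (ha : a ∈ f) (hb : b ∈ f) :
    f = s(a, b) := by
  induction f using Sym2.ind with
  | _ x y =>
    rw [Sym2.mem_iff] at ha hb
    rcases ha with rfl | rfl <;> rcases hb with rfl | rfl
    · exact absurd rfl hab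
    · rfl
    · exact Sym2.eq_swap
    · exact absurd rfl hab

variable [DecidableRel H.lineGraph.Adj]

lemma mulVec_apply (u : H.edgeSet → ℝ) {a b : V} (hab : H.Adj a b) :
    (H.lineGraph.adjMatrix ℝ).mulVec u ⟨s(a, b), hab⟩
      = vsum H u a + vsum H u b - 2 * u ⟨s(a, b), hab⟩ := by
  set e₀ : H.edgeSet := (⟨s(a, b), hab⟩ : H.edgeSet) with he₀
  have hexp : (H.lineGraph.adjMatrix ℝ).mulVec u e₀
      = ∑ f : H.edgeSet, (if H.lineGraph.Adj e₀ f then u f else 0) := by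
    rw [adjMatrix_mulVec_apply, neighborFinset_eq_filter, Finset.sum_filter]
  rw [hexp]
  have hpt : ∀ f : H.edgeSet,
      (if H.lineGraph.Adj e₀ f then u f else 0)
      = ((if a ∈ (f : Sym2 V) then u f else 0) + (if b ∈ (f : Sym2 V) then u f else 0))
        - (if e₀ = f then 2 * u f else 0) := by
    intro f
    by_cases hf : e₀ = f
    · subst hf
      rw [if_neg (H.lineGraph.irrefl), if_pos, if_pos, if_pos rfl]
      · ring
      · show b ∈ s(a, b); simp
      · show a ∈ s(a, b); simp
    · rw [if_neg hf]
      by_cases ha : a ∈ (f : Sym2 V) <;> by_cases hb : b ∈ (f : Sym2 V)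
      · exact absurd (Subtype.ext (sym2_eq_of_mem hab.ne ha hb).symm) hf
      · rw [if_pos, if_pos ha, if_neg hb]
        · ring
        · exact lineGraph_adj_iff_exists.2 ⟨hf, a, by show a ∈ s(a, b); simp, ha⟩
      · rw [if_pos, if_neg ha, if_pos hb]
        · ring
        · exact lineGraph_adj_iff_exists.2 ⟨hf, b, by show b ∈ s(a, b); simp, hb⟩
      · rw [if_neg, if_neg ha, if_neg hb]
        · ring
        · intro hA
          obtain ⟨-, v, hv0, hvf⟩ := lineGraph_adj_iff_exists.1 hA
          have : v ∈ s(a, b) := hv0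
          rw [Sym2.mem_iff] at this
          rcases this with rfl | rfl
          · exact ha hvf
          · exact hb hvf
  rw [Finset.sum_congr rfl fun f _ => hpt f, Finset.sum_sub_distrib, Finset.sum_add_distrib]
  have hlast : ∑ f : H.edgeSet, (if e₀ = f then 2 * u f else 0) = 2 * u e₀ := by
    rw [Finset.sum_ite_eq]
    simp
  rw [hlast]
  rfl

lemma key_equiv :
    (∃ u : H.edgeSet → ℝ, u ≠ 0 ∧ (H.lineGraph.adjMatrix ℝ).mulVec u = (-2 : ℝ) • u) ↔
    (∃ u : H.edgeSet → ℝ, u ≠ 0 ∧ ∀ v, vsum H u v = 0) := by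
  constructor
  · rintro ⟨u, hu, hm⟩
    refine ⟨u, hu, ?_⟩
    have hsum : ∀ {a b : V}, H.Adj a b → vsum H u a + vsum H u b = 0 := by
      intro a b hab
      have h1 := congrFun hm ⟨s(a, b), hab⟩
      rw [mulVec_apply u hab] at h1
      simp only [Pi.smul_apply, smul_eq_mul] at h1
      linarith
    have hsq : ∑ v : V, (vsum H u v) ^ 2 = 0 := by
      have hswap : ∑ v : V, (vsum H u v) ^ 2
          = ∑ e : H.edgeSet, u e * ∑ v : V, (if v ∈ (e : Sym2 V) then vsum H u v else 0) := by
        calc ∑ v : V, (vsum H u v) ^ 2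
            = ∑ v : V, ∑ e : H.edgeSet,
                (if v ∈ (e : Sym2 V) then u e * vsum H u v else 0) := by
              refine Finset.sum_congr rfl fun v _ => ?_
              rw [pow_two]
              conv_lhs => rw [vsum]
              rw [Finset.sum_mul]
              refine Finset.sum_congr rfl fun e _ => ?_
              split <;> simp [vsum]
          _ = ∑ e : H.edgeSet, ∑ v : V,
                (if v ∈ (e : Sym2 V) then u e * vsum H u v else 0) := Finset.sum_comm
          _ = ∑ e : H.edgeSet, u e * ∑ v : V,
                (if v ∈ (e : Sym2 V) then vsum H u v else 0) := by
              refine Finset.sum_congr rfl fun e _ => ?_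
              rw [Finset.mul_sum]
              refine Finset.sum_congr rfl fun v _ => ?_
              split <;> simp
      rw [hswap]
      refine Finset.sum_eq_zero fun e he' => ?_
      clear he'
      obtain ⟨ev, he⟩ := e
      revert he
      induction ev using Sym2.ind with
      | _ a b =>
        intro he
        rw [sum_pair_mem (H.mem_edgeSet.1 he).ne (vsum H u), hsum (H.mem_edgeSet.1 he), mul_zero]
    intro v
    have h2 := (Finset.sum_eq_zero_iff_of_nonneg
      (fun w _ => sq_nonneg (vsum H u w))).1 hsq v (Finset.mem_univ v)
    exact pow_eq_zero_iff two_ne_zero |>.1 h2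
  · rintro ⟨u, hu, hv⟩
    refine ⟨u, hu, ?_⟩
    funext e₀
    obtain ⟨ev, he⟩ := e₀
    revert he
    induction ev using Sym2.ind with
    | _ a b =>
      intro he
      rw [mulVec_apply u (H.mem_edgeSet.1 he), hv a, hv b]
      simp only [Pi.smul_apply, smul_eq_mul]
      ring

end VSum


section Rank

open Module

variable [DecidableRel H.Adj]

/-- The incidence matrix of `H`. -/
def inc (H : SimpleGraph V) [DecidableRel H.Adj] : Matrix V H.edgeSet ℝ :=
  fun v e => if v ∈ (e : Sym2 V) then 1 else 0

lemma vsum_eq_mulVec (u : H.edgeSet → ℝ) (v : V) : vsum H u v = (inc H).mulVec u v := by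
  simp [vsum, inc, Matrix.mulVec, dotProduct, boole_mul]

lemma alternating {x : V → ℝ} (hx : ∀ {a b : V}, H.Adj a b → x a + x b = 0)
    {c d : V} (p : H.Walk c d) : x d = (-1 : ℝ) ^ p.length * x c := by
  induction p with
  | nil => simp
  | @cons a b c h p ih =>
    have hb : x b = -x a := by have := hx h; linarith
    rw [ih, hb, Walk.length_cons, pow_succ]
    ring

lemma eq_zero_of_odd_closed_walk (hconn : H.Connected)
    {w : V} (c : H.Walk w w) (hodd : Odd c.length) {x : V → ℝ}
    (hx : ∀ {a b : V}, H.Adj a b → x a + x b = 0) : x = 0 := by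
  have hw : x w = 0 := by
    have h1 := alternating hx c
    rw [hodd.neg_one_pow] at h1
    linarith
  funext v
  obtain ⟨p⟩ := hconn w v
  rw [Pi.zero_apply, alternating hx p, hw, mul_zero]

lemma u_eq_zero (hconn : H.Connected)
    (hodd : ∀ (v : V) (c : H.Walk v v), c.IsCycle → Odd c.length)
    (hm : Fintype.card H.edgeSet ≤ Fintype.card V)
    (u : H.edgeSet → ℝ) (hv : ∀ v, vsum H u v = 0) : u = 0 := by
  classical
  set φ := (inc H).mulVecLin with hφ
  set ψ := Matrix.mulVecLin (Matrix.transpose (inc H)) with hψ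
  have hker : ∀ x : V → ℝ, ψ x = 0 → ∀ {a b : V}, H.Adj a b → x a + x b = 0 := by
    intro x hx a b hab
    have h1 := congrFun hx (⟨s(a, b), hab⟩ : H.edgeSet)
    have h2 : ψ x (⟨s(a, b), hab⟩ : H.edgeSet) = ∑ v : V, (if v ∈ s(a, b) then x v else 0) := by
      simp [hψ, Matrix.mulVecLin_apply, Matrix.mulVec, Matrix.vecMul, dotProduct, inc,
        Matrix.transpose_apply, boole_mul, mul_boole, Sym2.mem_iff]
    rw [h2, sum_pair_mem hab.ne x] at h1
    exact h1
  have hu0 : φ u = 0 := by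
    funext v
    have := hv v
    rw [vsum_eq_mulVec] at this
    exact this
  have hrank1 := LinearMap.finrank_range_add_finrank_ker φ
  have hrank2 := LinearMap.finrank_range_add_finrank_ker ψ
  rw [Module.finrank_pi] at hrank1 hrank2
  have hA : Matrix.rank (inc H) = finrank ℝ (LinearMap.range φ) := rfl
  have hC : Matrix.rank (Matrix.transpose (inc H)) = finrank ℝ (LinearMap.range ψ) := rfl
  have htr : finrank ℝ (LinearMap.range ψ) = finrank ℝ (LinearMap.range φ) := by
    rw [← hA, ← hC, Matrix.rank_transpose]
  have hBzero : finrank ℝ (LinearMap.ker φ) = 0 := by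
    by_cases hac : H.IsAcyclic
    · have htree : H.IsTree := ⟨hconn, hac⟩
      have hcard := htree.card_edgeFinset
      have hEcard : Fintype.card H.edgeSet = H.edgeFinset.card :=
        (Set.toFinset_card _).symm
      obtain ⟨r⟩ := hconn.nonempty
      have hinjsub : ∀ z : V → ℝ, ψ z = 0 → z r = 0 → z = 0 := by
        intro z hz hzr
        funext v
        obtain ⟨p⟩ := hconn r v
        rw [Pi.zero_apply, alternating (hker z hz) p, hzr, mul_zero]
      have hinj : Function.Injective
          ((LinearMap.proj r : ((V → ℝ) →ₗ[ℝ] ℝ)).comp (LinearMap.ker ψ).subtype) := by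
        intro x y hxy
        have hd : ψ ((x : V → ℝ) - (y : V → ℝ)) = 0 := by
          rw [map_sub, LinearMap.mem_ker.mp x.2, LinearMap.mem_ker.mp y.2, sub_zero]
        have : (x : V → ℝ) - (y : V → ℝ) = 0 := by
          refine hinjsub _ hd ?_
          have h' : (x : V → ℝ) r = (y : V → ℝ) r := hxy
          simp [h']
        exact Subtype.ext (sub_eq_zero.mp this)
      have hle : finrank ℝ (LinearMap.ker ψ) ≤ 1 := by
        have := LinearMap.finrank_le_finrank_of_injective hinj
        simpa using this
      omega
    · simp only [SimpleGraph.IsAcyclic] at hac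
      push_neg at hac
      obtain ⟨w, c, hc⟩ := hac
      have hoddc := hodd w c hc
      have hkb : LinearMap.ker ψ = ⊥ := by
        rw [eq_bot_iff]
        intro x hx
        have h0 := eq_zero_of_odd_closed_walk hconn c hoddc (hker x (LinearMap.mem_ker.mp hx))
        simp [h0]
      have hD : finrank ℝ (LinearMap.ker ψ) = 0 := by rw [hkb]; simp
      omega
  have hbot : LinearMap.ker φ = ⊥ := Submodule.finrank_eq_zero.mp hBzero
  have : u ∈ LinearMap.ker φ := hu0
  rw [hbot, Submodule.mem_bot] at this
  exact this

end Rank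


section Graph

lemma connected_sdiff_of_reachable (hconn : H.Connected) {x y : V}
    (hr : (H \ fromEdgeSet {s(x, y)}).Reachable x y) :
    (H \ fromEdgeSet {s(x, y)}).Connected := by
  have key : ∀ {a b : V}, H.Walk a b → (H \ fromEdgeSet {s(x, y)}).Reachable a b := by
    intro a b p
    induction p with
    | nil => exact Reachable.refl _
    | @cons a c b h p ih =>
      refine Reachable.trans ?_ ih
      by_cases he : s(a, c) = s(x, y)
      · rw [Sym2.eq_iff] at he
        rcases he with ⟨rfl, rfl⟩ | ⟨rfl, rfl⟩
        · exact hr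
        · exact hr.symm
      · refine Adj.reachable ?_
        rw [sdiff_adj]
        exact ⟨h, by simp [fromEdgeSet_adj, he]⟩
  rw [connected_iff]
  refine ⟨fun a b => ?_, hconn.nonempty⟩
  obtain ⟨p⟩ := hconn a b
  exact key p

lemma exists_two_cycles [DecidableRel H.Adj] (hconn : H.Connected)
    (hm : Fintype.card V + 1 ≤ H.edgeFinset.card) :
    ∃ (v w : V) (c : H.Walk v v) (d : H.Walk w w), c.IsCycle ∧ d.IsCycle ∧
      c.edges.toFinset ≠ d.edges.toFinset := by
  classical
  have hnac : ¬ H.IsAcyclic := by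
    intro hac
    have := (⟨hconn, hac⟩ : H.IsTree).card_edgeFinset
    omega
  simp only [IsAcyclic] at hnac
  push_neg at hnac
  obtain ⟨v, c, hc⟩ := hnac
  have hlen := hc.three_le_length
  have hel : c.edges.length = c.length := c.length_edges
  obtain ⟨e₀, he₀⟩ := List.exists_mem_of_length_pos (by omega : 0 < c.edges.length)
  revert he₀
  induction e₀ using Sym2.ind with
  | _ x y =>
  intro he₀
  have he₀E : s(x, y) ∈ H.edgeSet := c.edges_subset_edgeSet he₀
  have hr : (H \ fromEdgeSet {s(x, y)}).Reachable x y :=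
    (adj_and_reachable_delete_edges_iff_exists_cycle.2 ⟨v, c, hc, he₀⟩).2
  have hconn' : (H \ fromEdgeSet {s(x, y)}).Connected := connected_sdiff_of_reachable hconn hr
  have hset : (H \ fromEdgeSet {s(x, y)}).edgeSet = H.edgeSet \ {s(x, y)} := by
    rw [edgeSet_sdiff, edgeSet_fromEdgeSet, edgeSet_sdiff_sdiff_isDiag]
  haveI : Fintype ((H \ fromEdgeSet {s(x, y)}).edgeSet) := Fintype.ofFinite _
  have hcard' : (H \ fromEdgeSet {s(x, y)}).edgeFinset.card + 1 = H.edgeFinset.card := by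
    have hxy : s(x, y) ∈ H.edgeFinset := by rwa [mem_edgeFinset]
    have hfs : (H \ fromEdgeSet {s(x, y)}).edgeFinset = H.edgeFinset.erase s(x, y) := by
      ext e
      simp only [mem_edgeFinset, Finset.mem_erase, hset, Set.mem_diff, Set.mem_singleton_iff]
      tauto
    rw [hfs, Finset.card_erase_add_one hxy]
  have hnac' : ¬ (H \ fromEdgeSet {s(x, y)}).IsAcyclic := by
    intro hac
    have := (⟨hconn', hac⟩ : (H \ fromEdgeSet {s(x, y)}).IsTree).card_edgeFinset
    omega
  simp only [IsAcyclic] at hnac'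
  push_neg at hnac'
  obtain ⟨w, d', hd'⟩ := hnac'
  have hle : (H \ fromEdgeSet {s(x, y)}) ≤ H := sdiff_le
  refine ⟨v, w, c, d'.mapLe hle, hc, (Walk.mapLe_isCycle hle).2 hd', ?_⟩
  have hdedges : (d'.mapLe hle).edges = d'.edges := by
    have hid : ∀ e ∈ d'.edges, Sym2.map (Hom.ofLE hle) e = e := by
      intro e _
      induction e using Sym2.ind with
      | _ p q => simp [Sym2.map_pair_eq, Hom.ofLE_apply]
    rw [Walk.mapLe, Walk.edges_map]
    exact (List.map_congr_left hid).trans (List.map_id _)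
  have hnotin : s(x, y) ∉ d'.edges := by
    intro hmem
    have := d'.edges_subset_edgeSet hmem
    rw [hset] at this
    exact this.2 rfl
  intro heq
  have h1 : s(x, y) ∈ (d'.mapLe hle).edges.toFinset := heq ▸ List.mem_toFinset.2 he₀
  rw [hdedges, List.mem_toFinset] at h1
  exact hnotin h1

end Graph

end Stmt8

/-- For a finite, simple, connected graph `H` with at least one edge, `-2`
is an eigenvalue of the adjacency matrix of the line graph `L(H)` if and only if `H`
contains a cycle of even length, or two cycles of odd length with distinct edge sets. -/
theorem lineGraph_adjMatrix_has_eigenvalue_neg_two_iff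
    {V : Type*} [Fintype V] [DecidableEq V] (H : SimpleGraph V) [DecidableRel H.Adj]
    [DecidableRel H.lineGraph.Adj]
    (hconn : H.Connected) (hE : H.edgeFinset.Nonempty) :
    (∃ u : H.edgeSet → ℝ, u ≠ 0 ∧
        (H.lineGraph.adjMatrix ℝ).mulVec u = (-2 : ℝ) • u) ↔
    ((∃ (v : V) (c : H.Walk v v), c.IsCycle ∧ Even c.length) ∨
      (∃ (v w : V) (c : H.Walk v v) (d : H.Walk w w),
        c.IsCycle ∧ d.IsCycle ∧ Odd c.length ∧ Odd d.length ∧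
        c.edges.toFinset ≠ d.edges.toFinset)) := by
  classical
  rw [Stmt8.key_equiv]
  constructor
  · rintro ⟨u, hu, hv⟩
    by_cases hEven : ∃ (v : V) (c : H.Walk v v), c.IsCycle ∧ Even c.length
    · exact Or.inl hEven
    · right
      push_neg at hEven
      have hodd : ∀ (v : V) (c : H.Walk v v), c.IsCycle → Odd c.length := fun v c hc =>
        by simpa using hEven v c hc
      by_cases hm : Fintype.card H.edgeSet ≤ Fintype.card V
      · exact absurd (Stmt8.u_eq_zero hconn hodd hm u hv) hu
      · push_neg at hm
        have hm' : Fintype.card V + 1 ≤ H.edgeFinset.card := by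
          have hec : Fintype.card H.edgeSet = H.edgeFinset.card := (Set.toFinset_card _).symm
          omega
        obtain ⟨v, w, c, d, hc, hd, hne⟩ := Stmt8.exists_two_cycles hconn hm'
        exact ⟨v, w, c, d, hc, hd, hodd _ _ hc, hodd _ _ hd, hne⟩
  · rintro (⟨v, c, hc, hev⟩ | ⟨v, w, c, d, hc, hd, hco, hdo, hne⟩)
    · refine ⟨fun e => ((Stmt8.wsum c (e : Sym2 V) : ℤ) : ℝ), ?_, ?_⟩
      · have h3 := hc.three_le_length
        have hel : c.edges.length = c.length := c.length_edges
        obtain ⟨e₀, he₀⟩ := List.exists_mem_of_length_pos (by omega : 0 < c.edges.length)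
        have he₀E : e₀ ∈ H.edgeSet := c.edges_subset_edgeSet he₀
        have hcount : c.edges.count e₀ = 1 := hc.isTrail.count_edges_eq_one he₀
        have hw : Stmt8.wsum c e₀ ≠ 0 :=
          Stmt8.wsum_ne_zero_of_odd_count c e₀ (by rw [hcount]; exact odd_one)
        intro h0
        have h1 := congrFun h0 ⟨e₀, he₀E⟩
        simp only [Pi.zero_apply, Int.cast_eq_zero] at h1
        exact hw h1
      · intro z
        rw [Stmt8.vsum_wsum c z, hev.neg_one_pow, one_mul, sub_self]
    · obtain ⟨p⟩ := hconn v w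
      refine ⟨fun e => ((Stmt8.wsum (c.append (p.append (d.append p.reverse)))
        (e : Sym2 V) : ℤ) : ℝ), ?_, ?_⟩
      · have hex : ∃ e₀ : Sym2 V,
            (e₀ ∈ c.edges ∧ e₀ ∉ d.edges) ∨ (e₀ ∈ d.edges ∧ e₀ ∉ c.edges) := by
          by_contra hcon
          push_neg at hcon
          apply hne
          ext e
          simp only [List.mem_toFinset]
          exact ⟨fun h => (hcon e).1 h, fun h => (hcon e).2 h⟩
        obtain ⟨e₀, hcase⟩ := hex
        have hcnt : Odd ((c.append (p.append (d.append p.reverse))).edges.count e₀) := by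
          simp only [Walk.edges_append, List.count_append, Walk.edges_reverse,
            List.count_reverse]
          rcases hcase with ⟨h1, h2⟩ | ⟨h1, h2⟩
          · rw [hc.isTrail.count_edges_eq_one h1, List.count_eq_zero_of_not_mem h2,
              Nat.odd_iff]
            omega
          · rw [hd.isTrail.count_edges_eq_one h1, List.count_eq_zero_of_not_mem h2,
              Nat.odd_iff]
            omega
        have hW0 : Stmt8.wsum (c.append (p.append (d.append p.reverse))) e₀ ≠ 0 :=
          Stmt8.wsum_ne_zero_of_odd_count _ e₀ hcnt
        have he₀E : e₀ ∈ H.edgeSet := by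
          rcases hcase with ⟨h1, _⟩ | ⟨h1, _⟩
          exacts [c.edges_subset_edgeSet h1, d.edges_subset_edgeSet h1]
        intro h0
        have h1 := congrFun h0 ⟨e₀, he₀E⟩
        simp only [Pi.zero_apply, Int.cast_eq_zero] at h1
        exact hW0 h1
      · intro z
        rw [Stmt8.vsum_wsum _ z]
        have hlen : Even (c.append (p.append (d.append p.reverse))).length := by
          simp only [Walk.length_append, Walk.length_reverse]
          rw [Nat.odd_iff] at hco hdo
          rw [Nat.even_iff]
          omega
        rw [hlen.neg_one_pow, one_mul, sub_self]
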